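/- Let $\Phi \in \mathbb{R}^{M \times N}$, let $x \in \mathbb{R}^N$ have block structure over index set $\Omega = \{1, \dots, l\}$ with $l \ge 2$, and let $1 \le n \le m \le l$. Let $\{\Pi_i\}_{i \in \mathcal{J}}$ enumerate all size-$m$ subsets of $\Omega$ and $\{\Lambda_j\}_{j \in \mathcal{K}}$ all size-$n$ subsets of $\Omega$. Then $\sum_{i \in \mathcal{J}} \frac{(l-n)\|\Phi x_{\Pi_i}\|_2^2}{m |\mathcal{J}|} - \sum_{j \in \mathcal{K}} \frac{(l-m)\|\Phi x_{\Lambda_j}\|_2^2}{n |\mathcal{K}|} = \frac{(m-n)\|\Phi x\|_2^2}{l}$. -/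

import Mathlib

open Finset

/-- The space of block-structured vectors in `ℝ^N`, where `N = d 0 + ⋯ + d (l-1)`:
block `i` lives in `ℝ^(d i)` and the whole space carries the `ℓ₂` norm. -/
abbrev BlockVec {l : ℕ} (d : Fin l → ℕ) :=
  PiLp 2 (fun i : Fin l => EuclideanSpace ℝ (Fin (d i)))

/-- `x` is block `s`-sparse: at most `s` nonzero blocks. -/
def BlockSparse {l : ℕ} {d : Fin l → ℕ} (s : ℕ) (x : BlockVec d) : Prop :=
  ∃ S : Finset (Fin l), S.card ≤ s ∧ ∀ i ∉ S, x i = 0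

/-- The mixed `ℓ₂/ℓ₁` norm `‖x‖_{2,ℐ} = ∑ i, ‖x[i]‖₂`. -/
noncomputable def blockL1 {l : ℕ} {d : Fin l → ℕ} (x : BlockVec d) : ℝ :=
  ∑ i, ‖x i‖

/-- `x_S`: keep the blocks indexed by `S`, zero out the rest. -/
def blockRestrict {l : ℕ} {d : Fin l → ℕ} (x : BlockVec d) (S : Finset (Fin l)) :
    BlockVec d := WithLp.toLp 2 (fun i => if i ∈ S then x i else 0)

/-- Counting lemma: the number of `k`-subsets of `s` containing a fixed subset `t`. -/
lemma aux_count {α : Type*} [DecidableEq α] (s t : Finset α) (hts : t ⊆ s) {k : ℕ}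
    (hk : t.card ≤ k) :
    ((s.powersetCard k).filter (fun P => t ⊆ P)).card
      = (s.card - t.card).choose (k - t.card) := by
  rw [← Finset.card_sdiff_of_subset hts, ← Finset.card_powersetCard]
  apply Finset.card_bij (fun P _ => P \ t)
  · intro P hP
    simp only [Finset.mem_filter, Finset.mem_powersetCard] at hP ⊢
    obtain ⟨⟨hPs, hPc⟩, htP⟩ := hP
    exact ⟨Finset.sdiff_subset_sdiff hPs le_rfl, by rw [Finset.card_sdiff_of_subset htP, hPc]⟩
  · intro P1 hP1 P2 hP2 h
    simp only [Finset.mem_filter, Finset.mem_powersetCard] at hP1 hP2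
    rw [← Finset.sdiff_union_of_subset hP1.2, ← Finset.sdiff_union_of_subset hP2.2, h]
  · intro Q hQ
    simp only [Finset.mem_powersetCard] at hQ
    obtain ⟨hQs, hQc⟩ := hQ
    have hdisj : Disjoint Q t := Finset.disjoint_of_subset_left hQs Finset.sdiff_disjoint
    refine ⟨Q ∪ t, ?_, Finset.union_sdiff_cancel_right hdisj⟩
    simp only [Finset.mem_filter, Finset.mem_powersetCard]
    refine ⟨⟨Finset.union_subset (hQs.trans Finset.sdiff_subset) hts, ?_⟩,
      Finset.subset_union_right⟩
    rw [Finset.card_union_of_disjoint hdisj, hQc, Nat.sub_add_cancel hk]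

/-- Lemma 2.2, first identity. -/
theorem block_subset_norm_identity {l M : ℕ} {d : Fin l → ℕ}
    (Φ : BlockVec d →ₗ[ℝ] EuclideanSpace ℝ (Fin M))
    (x : BlockVec d) (hl : 2 ≤ l) (m n : ℕ) (hn : 1 ≤ n) (hnm : n ≤ m) (hml : m ≤ l) :
    ∑ P ∈ (Finset.univ : Finset (Fin l)).powersetCard m,
        ((l : ℝ) - n) * ‖Φ (blockRestrict x P)‖ ^ 2 / (m * l.choose m)
      - ∑ L ∈ (Finset.univ : Finset (Fin l)).powersetCard n,
          ((l : ℝ) - m) * ‖Φ (blockRestrict x L)‖ ^ 2 / (n * l.choose n)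
      = ((m : ℝ) - n) * ‖Φ x‖ ^ 2 / l := by
  classical
  set g : Fin l → Fin l → ℝ :=
    fun i j => inner ℝ (Φ (blockRestrict x {i})) (Φ (blockRestrict x {j})) with hg
  -- restriction splits into single blocks
  have hrestr : ∀ S : Finset (Fin l),
      blockRestrict x S = ∑ i ∈ S, blockRestrict x {i} := by
    intro S
    refine PiLp.ext fun j => ?_
    have hs : (∑ i ∈ S, blockRestrict x {i}) j = ∑ i ∈ S, (blockRestrict x {i}) j :=
      by rw [WithLp.ofLp_sum, Finset.sum_apply]
    rw [hs]
    simp only [blockRestrict, PiLp.toLp_apply, WithLp.ofLp_toLp, Finset.mem_singleton]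
    rw [Finset.sum_ite_eq S j (fun _ => x j)]
  have hnorm : ∀ S : Finset (Fin l),
      ‖Φ (blockRestrict x S)‖ ^ 2 = ∑ i ∈ S, ∑ j ∈ S, g i j := by
    intro S
    rw [hrestr S, map_sum, ← real_inner_self_eq_norm_sq, sum_inner]
    exact Finset.sum_congr rfl fun i _ => inner_sum _ _ _
  set D : ℝ := ∑ i, g i i with hD
  set A : ℝ := ∑ i, ∑ j, g i j with hA
  have hxA : ‖Φ x‖ ^ 2 = A := by
    have : blockRestrict x Finset.univ = x := by
      refine PiLp.ext fun j => ?_; simp [blockRestrict]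
    rw [← this, hnorm]
  -- key sum identity
  have key : ∀ k : ℕ, 1 ≤ k → k ≤ l →
      ∑ P ∈ (Finset.univ : Finset (Fin l)).powersetCard k, ‖Φ (blockRestrict x P)‖ ^ 2
        = ((l - 1).choose (k - 1) : ℝ) * D
          + (if 2 ≤ k then ((l - 2).choose (k - 2) : ℝ) else 0) * (A - D) := by
    intro k hk1 hkl
    have e1 : ∀ P ∈ (Finset.univ : Finset (Fin l)).powersetCard k,
        ‖Φ (blockRestrict x P)‖ ^ 2
          = ∑ i, ∑ j, if i ∈ P ∧ j ∈ P then g i j else 0 := by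
      intro P _
      rw [hnorm P]
      symm
      have : ∀ i : Fin l, (∑ j, if i ∈ P ∧ j ∈ P then g i j else 0)
          = if i ∈ P then ∑ j ∈ P, g i j else 0 := by
        intro i
        by_cases hi : i ∈ P
        · simp only [hi, true_and, if_true]
          rw [Finset.sum_ite_mem, Finset.univ_inter]
        · simp [hi]
      rw [Finset.sum_congr rfl fun i _ => this i, Finset.sum_ite_mem, Finset.univ_inter]
    rw [Finset.sum_congr rfl e1, Finset.sum_comm]
    rw [Finset.sum_congr rfl fun i _ => Finset.sum_comm]
    -- now: ∑ i, ∑ j, ∑ P, if i ∈ P ∧ j ∈ P then g i j else 0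
    have e2 : ∀ i j : Fin l,
        (∑ P ∈ (Finset.univ : Finset (Fin l)).powersetCard k,
            if i ∈ P ∧ j ∈ P then g i j else 0)
          = (if i = j then ((l - 1).choose (k - 1) : ℝ)
              else (if 2 ≤ k then ((l - 2).choose (k - 2) : ℝ) else 0)) * g i j := by
      intro i j
      rw [← Finset.sum_filter, Finset.sum_const, nsmul_eq_mul]
      congr 1
      by_cases hij : i = j
      · subst hij
        rw [if_pos rfl]
        have h1 : ((Finset.univ : Finset (Fin l)).powersetCard k).filter
            (fun P => i ∈ P ∧ i ∈ P)
            = ((Finset.univ : Finset (Fin l)).powersetCard k).filter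
              (fun P => ({i} : Finset (Fin l)) ⊆ P) := by
          apply Finset.filter_congr; intro P _; simp
        rw [h1, aux_count Finset.univ {i} (Finset.subset_univ _)
          (by simpa using hk1)]
        simp [Fintype.card_fin]
      · rw [if_neg hij]
        by_cases hk2 : 2 ≤ k
        · rw [if_pos hk2]
          have h1 : ((Finset.univ : Finset (Fin l)).powersetCard k).filter
              (fun P => i ∈ P ∧ j ∈ P)
              = ((Finset.univ : Finset (Fin l)).powersetCard k).filter
                (fun P => ({i, j} : Finset (Fin l)) ⊆ P) := by
            apply Finset.filter_congr; intro P _; simp [Finset.insert_subset_iff]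
          have hc : ({i, j} : Finset (Fin l)).card = 2 := Finset.card_pair hij
          rw [h1, aux_count Finset.univ {i, j} (Finset.subset_univ _)
            (by rw [hc]; exact hk2)]
          rw [hc]
          simp [Fintype.card_fin]
        · rw [if_neg hk2]
          have hk1' : k = 1 := le_antisymm (by omega) hk1
          norm_cast
          rw [Finset.card_eq_zero, Finset.filter_eq_empty_iff]
          intro P hP
          rw [Finset.mem_powersetCard] at hP
          rintro ⟨hiP, hjP⟩
          have : 1 < P.card := Finset.one_lt_card.2 ⟨i, hiP, j, hjP, hij⟩
          omega
    rw [Finset.sum_congr rfl fun i _ => Finset.sum_congr rfl fun j _ => e2 i j]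
    -- split the if
    have e3 : ∀ i j : Fin l,
        (if i = j then ((l - 1).choose (k - 1) : ℝ)
            else (if 2 ≤ k then ((l - 2).choose (k - 2) : ℝ) else 0)) * g i j
          = (if 2 ≤ k then ((l - 2).choose (k - 2) : ℝ) else 0) * g i j
            + (if j = i then (((l - 1).choose (k - 1) : ℝ)
                - (if 2 ≤ k then ((l - 2).choose (k - 2) : ℝ) else 0)) * g i j else 0) := by
      intro i j
      by_cases hij : i = j
      · subst hij
        by_cases hk2 : 2 ≤ k
        · simp [hk2]; ring
        · simp [hk2]
      · rw [if_neg hij, if_neg (Ne.symm hij)]; ring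
    rw [Finset.sum_congr rfl fun i _ => Finset.sum_congr rfl fun j _ => e3 i j]
    have e4 : ∀ i : Fin l,
        (∑ j, ((if 2 ≤ k then ((l - 2).choose (k - 2) : ℝ) else 0) * g i j
          + (if j = i then (((l - 1).choose (k - 1) : ℝ)
              - (if 2 ≤ k then ((l - 2).choose (k - 2) : ℝ) else 0)) * g i j else 0)))
          = (if 2 ≤ k then ((l - 2).choose (k - 2) : ℝ) else 0) * (∑ j, g i j)
            + (((l - 1).choose (k - 1) : ℝ)
              - (if 2 ≤ k then ((l - 2).choose (k - 2) : ℝ) else 0)) * g i i := by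
      intro i
      rw [Finset.sum_add_distrib, ← Finset.mul_sum,
        Finset.sum_ite_eq' Finset.univ i
          (fun j => (((l - 1).choose (k - 1) : ℝ)
            - (if 2 ≤ k then ((l - 2).choose (k - 2) : ℝ) else 0)) * g i j)]
      simp
    rw [Finset.sum_congr rfl fun i _ => e4 i, Finset.sum_add_distrib, ← Finset.mul_sum,
      ← Finset.mul_sum, ← hA, ← hD]
    ring
  -- choose identities (real versions)
  have hm1 : 1 ≤ m := le_trans hn hnm
  have hnl : n ≤ l := le_trans hnm hml
  have hl0 : (l : ℝ) ≠ 0 := by positivity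
  have hl1 : ((l : ℝ) - 1) ≠ 0 := by
    have : (2 : ℝ) ≤ l := by exact_mod_cast hl
    linarith
  have hm0 : (m : ℝ) ≠ 0 := by positivity
  have hn0 : (n : ℝ) ≠ 0 := by positivity
  have hCm0 : ((l.choose m : ℕ) : ℝ) ≠ 0 := by
    exact_mod_cast (Nat.choose_pos hml).ne'
  have hCn0 : ((l.choose n : ℕ) : ℝ) ≠ 0 := by
    exact_mod_cast (Nat.choose_pos hnl).ne'
  have hdiag : ∀ k : ℕ, 1 ≤ k → k ≤ l →
      (((l - 1).choose (k - 1) : ℕ) : ℝ) = k * (l.choose k) / l := by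
    intro k hk1 hkl
    have hnat : l * (l - 1).choose (k - 1) = l.choose k * k := by
      have h := Nat.add_one_mul_choose_eq (l - 1) (k - 1)
      rwa [show l - 1 + 1 = l by omega, show k - 1 + 1 = k by omega] at h
    have hc := congrArg (fun t : ℕ => (t : ℝ)) hnat
    push_cast at hc
    field_simp
    linarith
  have hoff : ∀ k : ℕ, 1 ≤ k → k ≤ l →
      (if 2 ≤ k then (((l - 2).choose (k - 2) : ℕ) : ℝ) else 0)
        = ((k : ℝ) - 1) * (k * (l.choose k)) / (l * ((l : ℝ) - 1)) := by
    intro k hk1 hkl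
    by_cases hk2 : 2 ≤ k
    · rw [if_pos hk2]
      have hnat : (l - 1) * (l - 2).choose (k - 2) = (l - 1).choose (k - 1) * (k - 1) := by
        have h := Nat.add_one_mul_choose_eq (l - 2) (k - 2)
        rwa [show l - 2 + 1 = l - 1 by omega, show k - 2 + 1 = k - 1 by omega] at h
      have hc := congrArg (fun t : ℕ => (t : ℝ)) hnat
      push_cast [Nat.cast_sub (show 1 ≤ l by omega), Nat.cast_sub hk1] at hc
      have hd := hdiag k hk1 hkl
      rw [hd] at hc
      field_simp at hc ⊢
      linarith
    · rw [if_neg hk2]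
      have : k = 1 := by omega
      subst this
      norm_num
  have hTm := key m hm1 hml
  have hTn := key n hn hnl
  rw [hdiag m hm1 hml, hoff m hm1 hml] at hTm
  rw [hdiag n hn hnl, hoff n hn hnl] at hTn
  rw [← Finset.sum_div, ← Finset.mul_sum, ← Finset.sum_div, ← Finset.mul_sum,
    hTm, hTn, hxA]
  field_simp
  ring
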